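/- Let H be a complex Hilbert space, S a commutative monoid with unit 1 equipped with a star operation (star (s*t) = star s * star t, star (star s) = s, star 1 = 1), and φ : S → (H →L[ℂ] H) with φ 1 = 1 (the identity operator). Assume: (LPD) for every finitely supported h : S → H the sum ∑_{s,t} ⟨φ(star t * s) (h s), h t⟩ is a nonnegative real number; and (BC) there is a function C : S → ℝ with C u > 0 for all u, such that for every u ∈ S and every finitely supported h : S → H, Re(∑_{s,t} ⟨φ(star t * star u * u * s) (h s), h t⟩) ≤ (C u)² · Re(∑_{s,t} ⟨φ(star t * s) (h s), h t⟩). Then there exist a complex Hilbert space K, a linear isometry J : H → K, and a map π : S → (K →L[ℂ] K) such that π 1 = 1, π (s*t) = (π s) ∘ (π t) for all s, t, π (star s) = (π s)† for all s, φ s = J† ∘ (π s) ∘ J for all s ∈ S, ‖π u‖ ≤ C u for all u ∈ S, and the closed linear span of { (π s) (J h) : s ∈ S, h ∈ H } equals K. -/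

import Mathlib

open ContinuousLinearMap
open scoped InnerProductSpace

universe u v


namespace SzNagyAux

variable {H : Type u} [NormedAddCommGroup H] [InnerProductSpace ℂ H]
variable {S : Type v} [CommMonoid S] [StarMul S]

/-- The sesquilinear form on `S →₀ H` induced by `φ`. -/
noncomputable def B (φ : S → (H →L[ℂ] H)) (h k : S →₀ H) : ℂ :=
  h.sum fun s x => k.sum fun t y => ⟪φ (star t * s) x, y⟫_ℂ

variable (φ : S → (H →L[ℂ] H))

lemma B_eq (h k : S →₀ H) :
    B φ h k = ∑ s ∈ h.support, ∑ t ∈ k.support, ⟪φ (star t * s) (h s), k t⟫_ℂ := rfl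

lemma inner_sum_zero (s : S) (k : S →₀ H) :
    (k.sum fun t y => ⟪φ (star t * s) (0 : H), y⟫_ℂ) = 0 :=
  Finset.sum_eq_zero fun _ _ => by simp

lemma inner_sum_add (s : S) (k : S →₀ H) (x₁ x₂ : H) :
    (k.sum fun t y => ⟪φ (star t * s) (x₁ + x₂), y⟫_ℂ)
      = (k.sum fun t y => ⟪φ (star t * s) x₁, y⟫_ℂ)
        + (k.sum fun t y => ⟪φ (star t * s) x₂, y⟫_ℂ) := by
  classical
  simp only [Finsupp.sum, ← Finset.sum_add_distrib]
  exact Finset.sum_congr rfl fun t _ => by simp [inner_add_left]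

lemma B_add_left (h₁ h₂ k : S →₀ H) : B φ (h₁ + h₂) k = B φ h₁ k + B φ h₂ k :=
  Finsupp.sum_add_index' (fun s => inner_sum_zero φ s k) (fun s => inner_sum_add φ s k)

lemma B_add_right (h k₁ k₂ : S →₀ H) : B φ h (k₁ + k₂) = B φ h k₁ + B φ h k₂ := by
  classical
  unfold B
  simp only [Finsupp.sum, ← Finset.sum_add_distrib]
  refine Finset.sum_congr rfl fun s _ => ?_
  exact Finsupp.sum_add_index' (fun t => by simp) (fun t y₁ y₂ => by simp [inner_add_right])

lemma B_smul_left (c : ℂ) (h k : S →₀ H) :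
    B φ (c • h) k = starRingEnd ℂ c * B φ h k := by
  classical
  unfold B
  rw [Finsupp.sum_smul_index' (fun s => inner_sum_zero φ s k)]
  simp only [Finsupp.sum, Finset.mul_sum]
  exact Finset.sum_congr rfl fun s _ => Finset.sum_congr rfl fun t _ => by
    simp [inner_smul_left, mul_comm]

lemma B_smul_right (c : ℂ) (h k : S →₀ H) : B φ h (c • k) = c * B φ h k := by
  classical
  unfold B
  simp only [Finsupp.sum, Finset.mul_sum]
  refine Finset.sum_congr rfl fun s _ => ?_
  rw [Finset.sum_subset Finsupp.support_smul
      (fun t _ ht => by simp [Finsupp.notMem_support_iff.1 ht])]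
  exact Finset.sum_congr rfl fun t _ => by simp [inner_smul_right]

lemma B_single_single (s t : S) (x y : H) :
    B φ (Finsupp.single s x) (Finsupp.single t y) = ⟪φ (star t * s) x, y⟫_ℂ := by
  unfold B
  rw [Finsupp.sum_single_index (inner_sum_zero φ s _),
    Finsupp.sum_single_index (by simp)]

lemma B_map_left (u : S) (h k : S →₀ H) :
    B φ (Finsupp.mapDomain (u * ·) h) k
      = h.sum fun s x => k.sum fun t y => ⟪φ (star t * (u * s)) x, y⟫_ℂ :=
  Finsupp.sum_mapDomain_index (fun s => inner_sum_zero φ s k) (fun s => inner_sum_add φ s k)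

lemma B_map_right (u : S) (h k : S →₀ H) :
    B φ h (Finsupp.mapDomain (u * ·) k)
      = h.sum fun s x => k.sum fun t y => ⟪φ (star (u * t) * s) x, y⟫_ℂ := by
  unfold B
  refine Finsupp.sum_congr fun s _ => ?_
  exact Finsupp.sum_mapDomain_index (fun t => by simp)
    (fun t y₁ y₂ => by simp [inner_add_right])

lemma B_map_adjoint (u : S) (h k : S →₀ H) :
    B φ (Finsupp.mapDomain (u * ·) h) k = B φ h (Finsupp.mapDomain (star u * ·) k) := by
  rw [B_map_left, B_map_right]
  refine Finsupp.sum_congr fun s _ => Finsupp.sum_congr fun t _ => ?_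
  simp [star_mul, mul_assoc]

lemma B_map_diag (u : S) (h : S →₀ H) :
    B φ (Finsupp.mapDomain (u * ·) h) (Finsupp.mapDomain (u * ·) h)
      = h.sum fun s x => h.sum fun t y => ⟪φ (star t * star u * u * s) x, y⟫_ℂ := by
  rw [B_map_left]
  refine Finsupp.sum_congr fun s _ => ?_
  rw [Finsupp.sum_mapDomain_index (fun t => by simp)
    (fun t y₁ y₂ => by simp [inner_add_right])]
  exact Finsupp.sum_congr fun t _ => by simp [star_mul, mul_assoc]


lemma B_conj_symm (him : ∀ h : S →₀ H, (B φ h h).im = 0) (h k : S →₀ H) :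
    starRingEnd ℂ (B φ k h) = B φ h k := by
  have e1 : (B φ (h + k) (h + k)).im = 0 := him _
  have e2 : (B φ (h + Complex.I • k) (h + Complex.I • k)).im = 0 := him _
  simp only [B_add_left, B_add_right, B_smul_left, B_smul_right] at e1 e2
  have ihh := him h
  have ikk := him k
  simp only [Complex.add_im, Complex.add_re, Complex.mul_im, Complex.mul_re, Complex.conj_I,
    Complex.neg_re, Complex.neg_im, Complex.I_re, Complex.I_im, ihh, ikk] at e1 e2
  apply Complex.ext <;>
    simp only [Complex.conj_re, Complex.conj_im] <;> nlinarith [e1, e2]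

end SzNagyAux

open SzNagyAux

/-- **Theorem 5.1 (single Hilbert space): Sz.-Nagy type dilation theorem.**  A positive
definite `B(H)`-valued function `φ` on a commutative `*`-monoid `S`, with `φ 1 = 1` and
satisfying the boundedness condition, dilates to a `*`-representation `π` of `S` on a
larger Hilbert space `K`: `φ s = J† ∘ π s ∘ J` with `J : H → K` a linear isometry,
`‖π u‖ ≤ C u`, and `K` minimal. -/
theorem szNagy_dilation
    {H : Type u} [NormedAddCommGroup H] [InnerProductSpace ℂ H] [CompleteSpace H]
    {S : Type v} [CommMonoid S] [StarMul S]
    (φ : S → (H →L[ℂ] H)) (hφ1 : φ 1 = 1)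
    (hLPD : ∀ h : S →₀ H,
      0 ≤ (∑ s ∈ h.support, ∑ t ∈ h.support, ⟪φ (star t * s) (h s), h t⟫_ℂ).re ∧
      (∑ s ∈ h.support, ∑ t ∈ h.support, ⟪φ (star t * s) (h s), h t⟫_ℂ).im = 0)
    (C : S → ℝ) (hC : ∀ u : S, 0 < C u)
    (hBC : ∀ (u : S) (h : S →₀ H),
      (∑ s ∈ h.support, ∑ t ∈ h.support,
          ⟪φ (star t * star u * u * s) (h s), h t⟫_ℂ).re ≤
        (C u) ^ 2 *
          (∑ s ∈ h.support, ∑ t ∈ h.support, ⟪φ (star t * s) (h s), h t⟫_ℂ).re) :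
    ∃ (K : Type (max u v)) (_ : NormedAddCommGroup K) (_ : InnerProductSpace ℂ K)
      (_ : CompleteSpace K) (J : H →ₗᵢ[ℂ] K) (π : S → (K →L[ℂ] K)),
      π 1 = 1 ∧
      (∀ s t : S, π (s * t) = π s ∘L π t) ∧
      (∀ s : S, π (star s) = adjoint (π s)) ∧
      (∀ s : S, φ s =
        adjoint J.toContinuousLinearMap ∘L π s ∘L J.toContinuousLinearMap) ∧
      (∀ u : S, ‖π u‖ ≤ C u) ∧
      (Submodule.span ℂ
          {x : K | ∃ (s : S) (h : H), π s (J h) = x}).topologicalClosure = ⊤ := by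
  classical
  have hBB : ∀ h : S →₀ H, B φ h h
      = ∑ s ∈ h.support, ∑ t ∈ h.support, ⟪φ (star t * s) (h s), h t⟫_ℂ := fun h => rfl
  have him : ∀ h : S →₀ H, (B φ h h).im = 0 := fun h => by rw [hBB]; exact (hLPD h).2
  have hre : ∀ h : S →₀ H, 0 ≤ (B φ h h).re := fun h => by rw [hBB]; exact (hLPD h).1
  letI core : PreInnerProductSpace.Core ℂ (S →₀ H) :=
    { inner := B φ
      conj_inner_symm := fun x y => B_conj_symm φ him x y
      re_inner_nonneg := fun x => hre x
      add_left := fun x y z => B_add_left φ x y z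
      smul_left := fun x y r => B_smul_left φ r x y }
  letI : SeminormedAddCommGroup (S →₀ H) :=
    @InnerProductSpace.Core.toSeminormedAddCommGroup ℂ (S →₀ H) _ _ _ core
  letI : NormedSpace ℂ (S →₀ H) :=
    @InnerProductSpace.Core.toNormedSpace ℂ (S →₀ H) _ _ _ core
  letI : InnerProductSpace ℂ (S →₀ H) :=
    { (inferInstance : NormedSpace ℂ (S →₀ H)) with
      inner := B φ
      norm_sq_eq_re_inner := fun x => Real.sq_sqrt (core.re_inner_nonneg x)
      conj_inner_symm := core.conj_inner_symm
      add_left := core.add_left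
      smul_left := core.smul_left }
  have hinner : ∀ v w : S →₀ H, (⟪v, w⟫_ℂ : ℂ) = B φ v w := fun _ _ => rfl
  have hnormsq : ∀ v : S →₀ H, ‖v‖ ^ 2 = (B φ v v).re := by
    intro v
    have := (@inner_self_eq_norm_sq ℂ (S →₀ H) _ _ _ v).symm
    rwa [hinner, RCLike.re_to_complex] at this
  set K := UniformSpace.Completion (S →₀ H) with hK
  -- the isometry J
  have hJn : ∀ x : H, ‖((Finsupp.single (1 : S) x : S →₀ H) : K)‖ = ‖x‖ := by
    intro x
    rw [UniformSpace.Completion.norm_coe]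
    have h2 : ‖(Finsupp.single (1 : S) x : S →₀ H)‖ ^ 2 = ‖x‖ ^ 2 := by
      rw [hnormsq, B_single_single, star_one, one_mul, hφ1, ContinuousLinearMap.one_apply]
      rw [← RCLike.re_to_complex, inner_self_eq_norm_sq]
    have h3 := congrArg Real.sqrt h2
    rwa [Real.sqrt_sq (norm_nonneg _), Real.sqrt_sq (norm_nonneg _)] at h3
  let J : H →ₗᵢ[ℂ] K :=
    { toFun := fun x => ((Finsupp.single (1 : S) x : S →₀ H) : K)
      map_add' := fun x y => by
        simp only [Finsupp.single_add, UniformSpace.Completion.coe_add]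
      map_smul' := fun c x => by
        simp only [← Finsupp.smul_single, UniformSpace.Completion.coe_smul, RingHom.id_apply]
      norm_map' := hJn }
  -- the shift operators on the pre-Hilbert space
  have hLbound : ∀ (u : S) (v : S →₀ H),
      ‖Finsupp.lmapDomain H ℂ (u * ·) v‖ ≤ C u * ‖v‖ := by
    intro u v
    have h1 : ‖Finsupp.lmapDomain H ℂ (u * ·) v‖ ^ 2 ≤ (C u * ‖v‖) ^ 2 := by
      have e1 : ‖Finsupp.lmapDomain H ℂ (u * ·) v‖ ^ 2
          = (B φ (Finsupp.mapDomain (u * ·) v) (Finsupp.mapDomain (u * ·) v)).re :=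
        hnormsq _
      rw [e1, B_map_diag]
      calc (v.sum fun s x => v.sum fun t y => ⟪φ (star t * star u * u * s) x, y⟫_ℂ).re
          ≤ (C u) ^ 2 * (∑ s ∈ v.support, ∑ t ∈ v.support,
              ⟪φ (star t * s) (v s), v t⟫_ℂ).re := hBC u v
        _ = (C u) ^ 2 * (B φ v v).re := by rw [hBB]
        _ = (C u) ^ 2 * ‖v‖ ^ 2 := by rw [hnormsq]
        _ = (C u * ‖v‖) ^ 2 := by ring
    have h3 := Real.sqrt_le_sqrt h1
    rwa [Real.sqrt_sq (norm_nonneg _),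
      Real.sqrt_sq (mul_nonneg (hC u).le (norm_nonneg _))] at h3
  let P0 : S → (S →₀ H) →L[ℂ] (S →₀ H) := fun u =>
    (Finsupp.lmapDomain H ℂ (u * ·)).mkContinuous (C u) (hLbound u)
  have hP0 : ∀ (u : S) (v : S →₀ H), P0 u v = Finsupp.mapDomain (u * ·) v := fun _ _ => rfl
  -- extension to the completion
  let Pm : S → K → K := fun u => UniformSpace.Completion.map (P0 u)
  have hPmCont : ∀ u, Continuous (Pm u) := fun u => UniformSpace.Completion.continuous_map
  have hPm_coe : ∀ (u : S) (v : S →₀ H), Pm u v = ((P0 u v : S →₀ H) : K) := fun u v =>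
    UniformSpace.Completion.map_coe (P0 u).uniformContinuous v
  have hPm_add : ∀ (u : S) (x y : K), Pm u (x + y) = Pm u x + Pm u y := by
    intro u x y
    refine UniformSpace.Completion.induction_on₂ x y ?_ ?_
    · exact isClosed_eq ((hPmCont u).comp continuous_add)
        (((hPmCont u).comp continuous_fst).add ((hPmCont u).comp continuous_snd))
    · intro a b
      rw [← UniformSpace.Completion.coe_add, hPm_coe, hPm_coe, hPm_coe, map_add,
        UniformSpace.Completion.coe_add]
  have hPm_smul : ∀ (u : S) (c : ℂ) (x : K), Pm u (c • x) = c • Pm u x := by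
    intro u c x
    refine UniformSpace.Completion.induction_on x ?_ ?_
    · exact isClosed_eq ((hPmCont u).comp (continuous_const_smul c))
        ((hPmCont u).const_smul c)
    · intro a
      rw [← UniformSpace.Completion.coe_smul, hPm_coe, hPm_coe, map_smul,
        UniformSpace.Completion.coe_smul]
  have hPm_norm : ∀ (u : S) (x : K), ‖Pm u x‖ ≤ C u * ‖x‖ := by
    intro u x
    refine UniformSpace.Completion.induction_on x ?_ ?_
    · exact isClosed_le (continuous_norm.comp (hPmCont u))
        (continuous_const.mul continuous_norm)
    · intro a
      rw [hPm_coe, UniformSpace.Completion.norm_coe, UniformSpace.Completion.norm_coe]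
      exact (P0 u).le_of_opNorm_le (LinearMap.mkContinuous_norm_le _ (hC u).le _) a
  let P : S → K →L[ℂ] K := fun u =>
    LinearMap.mkContinuous
      { toFun := Pm u, map_add' := hPm_add u, map_smul' := hPm_smul u } (C u) (hPm_norm u)
  have hP_coe : ∀ (u : S) (v : S →₀ H), P u v = ((Finsupp.mapDomain (u * ·) v : S →₀ H) : K) :=
    fun u v => hPm_coe u v
  have ext_density : ∀ f g : K →L[ℂ] K, (∀ v : S →₀ H, f v = g v) → f = g := by
    intro f g hfg
    ext x
    exact UniformSpace.Completion.induction_on x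
      (isClosed_eq f.continuous g.continuous) hfg
  -- the six properties
  have hπ1 : P 1 = 1 := by
    refine ext_density _ _ fun v => ?_
    rw [hP_coe, ContinuousLinearMap.one_apply]
    have h1 : (fun x : S => 1 * x) = _root_.id := funext fun x => one_mul x
    rw [h1, Finsupp.mapDomain_id]
  have hπmul : ∀ s t : S, P (s * t) = P s ∘L P t := by
    intro s t
    refine ext_density _ _ fun v => ?_
    rw [ContinuousLinearMap.comp_apply, hP_coe, hP_coe, hP_coe]
    have : (fun x : S => s * t * x) = (fun x => s * x) ∘ fun x => t * x :=
      funext fun x => mul_assoc s t x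
    rw [this, Finsupp.mapDomain_comp]
  have hπstar : ∀ u : S, P (star u) = adjoint (P u) := by
    intro u
    rw [ContinuousLinearMap.eq_adjoint_iff]
    intro x y
    refine UniformSpace.Completion.induction_on₂ x y ?_ ?_
    · exact isClosed_eq
        (UniformSpace.Completion.Continuous.inner
          ((P (star u)).continuous.comp continuous_fst) continuous_snd)
        (UniformSpace.Completion.Continuous.inner continuous_fst
          ((P u).continuous.comp continuous_snd))
    · intro a b
      rw [hP_coe, hP_coe, UniformSpace.Completion.inner_coe, UniformSpace.Completion.inner_coe,
        hinner, hinner]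
      have hadj := B_map_adjoint φ (star u) a b
      rwa [star_star] at hadj
  have hPJ : ∀ (s : S) (x : H), P s (J x) = ((Finsupp.single s x : S →₀ H) : K) := by
    intro s x
    show P s ((Finsupp.single (1 : S) x : S →₀ H) : K) = _
    rw [hP_coe, Finsupp.mapDomain_single, mul_one]
  have hφeq : ∀ s : S,
      φ s = adjoint J.toContinuousLinearMap ∘L P s ∘L J.toContinuousLinearMap := by
    intro s
    refine ContinuousLinearMap.ext fun x => ?_
    refine ext_inner_right ℂ fun y => ?_
    rw [ContinuousLinearMap.comp_apply, ContinuousLinearMap.comp_apply,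
      ContinuousLinearMap.adjoint_inner_left]
    have h1 : P s (J.toContinuousLinearMap x) = ((Finsupp.single s x : S →₀ H) : K) :=
      hPJ s x
    rw [h1]
    have h2 : J.toContinuousLinearMap y = ((Finsupp.single (1 : S) y : S →₀ H) : K) := rfl
    rw [h2, UniformSpace.Completion.inner_coe, hinner, B_single_single, star_one, one_mul]
  have hπnorm : ∀ u : S, ‖P u‖ ≤ C u := fun u =>
    LinearMap.mkContinuous_norm_le _ (hC u).le _
  have hdense : (Submodule.span ℂ
      {x : K | ∃ (s : S) (h : H), P s (J h) = x}).topologicalClosure = ⊤ := by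
    rw [← Submodule.dense_iff_topologicalClosure_eq_top]
    have hsub : Set.range ((↑) : (S →₀ H) → K)
        ⊆ (Submodule.span ℂ {x : K | ∃ (s : S) (h : H), P s (J h) = x} : Set K) := by
      rintro _ ⟨v, rfl⟩
      have hv : ((v : K)) = ∑ s ∈ v.support, ((Finsupp.single s (v s) : S →₀ H) : K) := by
        conv_lhs => rw [← Finsupp.sum_single v]
        rw [Finsupp.sum, ← UniformSpace.Completion.coe_toComplL (𝕜 := ℂ)]
        exact map_sum (UniformSpace.Completion.toComplL (𝕜 := ℂ) :
          (S →₀ H) →L[ℂ] K) _ _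
      rw [hv]
      exact Submodule.sum_mem _ fun s _ => Submodule.subset_span ⟨s, v s, hPJ s (v s)⟩
    exact UniformSpace.Completion.denseRange_coe.mono hsub
  exact ⟨K, inferInstance, inferInstance, inferInstance, J, P,
    hπ1, hπmul, hπstar, hφeq, hπnorm, hdense⟩
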